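/- Let z_1,...,z_N be i.i.d. from q on a finite set Z with q > 0, and given these, draw Y from the categorical distribution over {z_1,...,z_N} with probabilities proportional to w_i = p(z_i)/q(z_i). Then for every z ∈ Z, P(Y = z) → p(z) as N → ∞. -/

import Mathlib

open scoped Classical

open MeasureTheory ProbabilityTheory Filter

private lemma aux_div_div (a b : ℝ) {c : ℝ} (hc : c ≠ 0) : (a / c) / (b / c) = a / b := by
  rcases eq_or_ne b 0 with rfl | hb
  · simp
  · field_simp

/-- Importance resampling (single sample): `P(Y = z) → p(z)` as `N → ∞`, where `Y` is drawn
from the categorical distribution over the i.i.d. `q`-samples with probabilities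
proportional to `w_i = p(z_i)/q(z_i)`; `P(Y = z)` is the expectation of the normalized
weight mass on samples equal to `z`. -/
theorem stmt_3 {Z : Type*} [Fintype Z] [MeasurableSpace Z] [MeasurableSingletonClass Z]
    (p q : Z → ℝ) (hq : ∀ z, 0 < q z) (hqsum : ∑ z, q z = 1)
    (hp : ∀ z, 0 ≤ p z) (hpsum : ∑ z, p z = 1)
    {Ω : Type*} [MeasurableSpace Ω] (μ : Measure Ω) [IsProbabilityMeasure μ]
    (X : ℕ → Ω → Z) (hXmeas : ∀ n, Measurable (X n))
    (hindep : iIndepFun X μ)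
    (hlaw : ∀ n z, μ {ω | X n ω = z} = ENNReal.ofReal (q z)) :
    ∀ z : Z, Tendsto
      (fun N => ∫ ω,
          (∑ i ∈ Finset.range N, if X i ω = z then p (X i ω) / q (X i ω) else 0) /
          (∑ i ∈ Finset.range N, p (X i ω) / q (X i ω)) ∂μ)
      atTop (nhds (p z)) := by
  intro z
  -- SLLN for compositions g ∘ X i
  have key : ∀ g : Z → ℝ, ∀ᵐ ω ∂μ,
      Tendsto (fun N : ℕ => (∑ i ∈ Finset.range N, g (X i ω)) / N) atTop
        (nhds (∑ w, q w * g w)) := by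
    intro g
    have hg : Measurable g := measurable_of_countable g
    have hmeas : ∀ i, Measurable (fun ω => g (X i ω)) := fun i => hg.comp (hXmeas i)
    have hmap : ∀ i, μ.map (X i) = μ.map (X 0) := by
      intro i
      apply MeasureTheory.Measure.ext_of_singleton
      intro a
      rw [Measure.map_apply (hXmeas i) (measurableSet_singleton a),
          Measure.map_apply (hXmeas 0) (measurableSet_singleton a)]
      have h1 : X i ⁻¹' {a} = {ω | X i ω = a} := rfl
      have h2 : X 0 ⁻¹' {a} = {ω | X 0 ω = a} := rfl
      rw [h1, h2, hlaw, hlaw]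
    have hident : ∀ i, IdentDistrib (fun ω => g (X i ω)) (fun ω => g (X 0 ω)) μ μ := by
      intro i
      refine ⟨(hmeas i).aemeasurable, (hmeas 0).aemeasurable, ?_⟩
      show Measure.map (g ∘ X i) μ = Measure.map (g ∘ X 0) μ
      rw [← Measure.map_map hg (hXmeas i), ← Measure.map_map hg (hXmeas 0), hmap i]
    have hpind : Pairwise (Function.onFun (IndepFun · · μ) fun i ω => g (X i ω)) := by
      intro i j hij
      exact (hindep.indepFun hij).comp hg hg
    have hintg : Integrable g (μ.map (X 0)) := by
      have : IsProbabilityMeasure (μ.map (X 0)) :=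
        Measure.isProbabilityMeasure_map (hXmeas 0).aemeasurable
      exact Integrable.of_finite
    have hint : Integrable (fun ω => g (X 0 ω)) μ := by
      have := (integrable_map_measure hg.aestronglyMeasurable
        (hXmeas 0).aemeasurable).mp hintg
      exact this
    have hInt : (∫ ω, g (X 0 ω) ∂μ) = ∑ w, q w * g w := by
      rw [← integral_map (hXmeas 0).aemeasurable hg.aestronglyMeasurable,
          integral_fintype hintg]
      refine Finset.sum_congr rfl fun w _ => ?_
      rw [Measure.real_def, Measure.map_apply (hXmeas 0) (measurableSet_singleton w)]
      have : X 0 ⁻¹' {w} = {ω | X 0 ω = w} := rfl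
      rw [this, hlaw, ENNReal.toReal_ofReal (hq w).le, smul_eq_mul]
    have H := strong_law_ae_real (fun i ω => g (X i ω)) hint hpind hident
    filter_upwards [H] with ω hω
    rw [hInt] at hω
    exact hω
  -- apply to the two relevant functions
  set g1 : Z → ℝ := fun w => if w = z then p w / q w else 0 with hg1def
  set g2 : Z → ℝ := fun w => p w / q w with hg2def
  have hsum1 : ∑ w, q w * g1 w = p z := by
    rw [hg1def]
    rw [Finset.sum_eq_single z]
    · simp [mul_div_cancel₀, (hq z).ne', mul_comm]
    · intro w _ hw; simp [hw]
    · intro h; exact absurd (Finset.mem_univ z) h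
  have hsum2 : ∑ w, q w * g2 w = 1 := by
    rw [hg2def, ← hpsum]
    refine Finset.sum_congr rfl fun w _ => ?_
    rw [mul_comm, div_mul_cancel₀ _ (hq w).ne']
  -- a.e. convergence of the ratio
  have hratio : ∀ᵐ ω ∂μ,
      Tendsto (fun N : ℕ =>
        (∑ i ∈ Finset.range N, if X i ω = z then p (X i ω) / q (X i ω) else 0) /
        (∑ i ∈ Finset.range N, p (X i ω) / q (X i ω))) atTop (nhds (p z)) := by
    filter_upwards [key g1, key g2] with ω h1 h2
    rw [hsum1] at h1
    rw [hsum2] at h2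
    have hdiv : Tendsto (fun N : ℕ =>
        ((∑ i ∈ Finset.range N, g1 (X i ω)) / N) /
        ((∑ i ∈ Finset.range N, g2 (X i ω)) / N)) atTop (nhds (p z / 1)) :=
      h1.div h2 one_ne_zero
    rw [div_one] at hdiv
    refine hdiv.congr' ?_
    filter_upwards [eventually_ge_atTop 1] with N hN
    have hN0 : (N : ℝ) ≠ 0 := by positivity
    rw [aux_div_div _ _ hN0]
  -- dominated convergence
  have hSnn : ∀ (N : ℕ) (ω : Ω),
      0 ≤ ∑ i ∈ Finset.range N, (if X i ω = z then p (X i ω) / q (X i ω) else 0) := by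
    intro N ω
    refine Finset.sum_nonneg fun i _ => ?_
    split
    · exact div_nonneg (hp _) (hq _).le
    · exact le_rfl
  have hST : ∀ (N : ℕ) (ω : Ω),
      (∑ i ∈ Finset.range N, if X i ω = z then p (X i ω) / q (X i ω) else 0) ≤
      ∑ i ∈ Finset.range N, p (X i ω) / q (X i ω) := by
    intro N ω
    refine Finset.sum_le_sum fun i _ => ?_
    split
    · exact le_rfl
    · exact div_nonneg (hp _) (hq _).le
  have hconst : (∫ _ : Ω, p z ∂μ) = p z := by
    simp
  rw [← hconst]
  refine tendsto_integral_of_dominated_convergence (fun _ => (1 : ℝ)) ?_ ?_ ?_ hratio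
  · intro N
    refine Measurable.aestronglyMeasurable (Measurable.div ?_ ?_)
    · exact Finset.measurable_sum _ fun i _ =>
        ((measurable_of_countable g1).comp (hXmeas i) : Measurable fun ω => g1 (X i ω))
    · exact Finset.measurable_sum _ fun i _ =>
        ((measurable_of_countable g2).comp (hXmeas i) : Measurable fun ω => g2 (X i ω))
  · exact integrable_const 1
  · intro N
    refine Filter.Eventually.of_forall fun ω => ?_
    rw [Real.norm_eq_abs, abs_of_nonneg
      (div_nonneg (hSnn N ω) ((hSnn N ω).trans (hST N ω)))]
    exact div_le_one_of_le₀ (hST N ω) ((hSnn N ω).trans (hST N ω))
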